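/- Let T > 0 and let Φ be a real constant. Suppose y : [0,T] → ℝ is differentiable with y'(σ) = Φ + v(σ) for all σ ∈ [0,T], where v : [0,T] → ℝ is continuous. Then Φ = -(6/T³) ∫₀ᵀ ((T - 2σ)·y(σ) + σ(T - σ)·v(σ)) dσ. -/

import Mathlib

open MeasureTheory intervalIntegral

theorem firstOrder_estimator_correct (T Φ : ℝ) (hT : 0 < T) (y v : ℝ → ℝ)
    (hv : ContinuousOn v (Set.Icc 0 T))
    (hy : ∀ σ ∈ Set.Icc (0:ℝ) T, HasDerivAt y (Φ + v σ) σ) :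
    Φ = -(6 / T ^ 3) *
      ∫ σ in (0:ℝ)..T, ((T - 2 * σ) * y σ + σ * (T - σ) * v σ) := by
  have huIcc : Set.uIcc (0:ℝ) T = Set.Icc 0 T := Set.uIcc_of_le hT.le
  have hu' : ∀ σ ∈ Set.uIcc (0:ℝ) T,
      HasDerivAt (fun σ => T * σ - σ ^ 2) (T - 2 * σ) σ := by
    intro σ _
    have h := ((hasDerivAt_id σ).const_mul T).sub (hasDerivAt_pow 2 σ)
    simpa [Pi.sub_def] using h
  have hy' : ∀ σ ∈ Set.uIcc (0:ℝ) T, HasDerivAt y (Φ + v σ) σ := by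
    rw [huIcc]; exact hy
  have hycont : ContinuousOn y (Set.Icc 0 T) := fun σ hσ =>
    (hy σ hσ).continuousAt.continuousWithinAt
  have hint1 : IntervalIntegrable (fun σ => T - 2 * σ) volume 0 T :=
    (continuous_const.sub (continuous_const.mul continuous_id)).intervalIntegrable 0 T
  have hint2 : IntervalIntegrable (fun σ => Φ + v σ) volume 0 T := by
    apply ContinuousOn.intervalIntegrable
    rw [huIcc]
    exact continuousOn_const.add hv
  have hparts := integral_deriv_mul_eq_sub hu' hy' hint1 hint2
  simp only [mul_zero, zero_pow, sub_zero, mul_self_eq_zero] at hparts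
  have hparts' : (∫ σ in (0:ℝ)..T,
      ((T - 2 * σ) * y σ + (T * σ - σ ^ 2) * (Φ + v σ))) = 0 := by
    rw [hparts]; ring
  have hsplit : ∀ σ : ℝ,
      (T - 2 * σ) * y σ + (T * σ - σ ^ 2) * (Φ + v σ)
      = ((T - 2 * σ) * y σ + σ * (T - σ) * v σ) + Φ * (T * σ - σ ^ 2) := by
    intro σ; ring
  have hintA : IntervalIntegrable
      (fun σ => (T - 2 * σ) * y σ + σ * (T - σ) * v σ) volume 0 T := by
    apply ContinuousOn.intervalIntegrable
    rw [huIcc]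
    exact (((continuousOn_const.sub (continuousOn_const.mul continuousOn_id)).mul hycont)).add
      (((continuousOn_id.mul (continuousOn_const.sub continuousOn_id)).mul hv))
  have hintB : IntervalIntegrable (fun σ => Φ * (T * σ - σ ^ 2)) volume 0 T :=
    (continuous_const.mul ((continuous_const.mul continuous_id).sub
      (continuous_pow 2))).intervalIntegrable 0 T
  have hpoly : (∫ σ in (0:ℝ)..T, Φ * (T * σ - σ ^ 2)) = Φ * T ^ 3 / 6 := by
    rw [intervalIntegral.integral_const_mul]
    rw [integral_sub (show IntervalIntegrable (fun x : ℝ => T * x) volume 0 T from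
        (continuous_const.mul continuous_id').intervalIntegrable 0 T)
      ((continuous_pow 2).intervalIntegrable 0 T)]
    rw [intervalIntegral.integral_const_mul]
    simp [integral_id, integral_pow]
    ring
  have key : (∫ σ in (0:ℝ)..T, ((T - 2 * σ) * y σ + σ * (T - σ) * v σ))
      = -(Φ * T ^ 3 / 6) := by
    have := hparts'
    rw [show (fun σ => (T - 2 * σ) * y σ + (T * σ - σ ^ 2) * (Φ + v σ))
        = (fun σ => ((T - 2 * σ) * y σ + σ * (T - σ) * v σ) + Φ * (T * σ - σ ^ 2))
        from funext hsplit] at this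
    rw [integral_add hintA hintB, hpoly] at this
    linarith
  rw [key]
  have hT3 : T ^ 3 ≠ 0 := pow_ne_zero 3 hT.ne'
  field_simp
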